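/- Let R be a ring of characteristic 0 and let a, b ∈ R with a² = b² = 0. Then a·b is nilpotent if and only if the subgroup ⟨1+a, 1+b⟩ of the unit group of R is a nilpotent group. -/

import Mathlib

open Polynomial
open scoped commutatorElement

namespace NilpUnitsAux

variable {R : Type*} [Ring R]

lemma cast_comm (c : ℤ) (z : R) : z * algebraMap ℤ R c = algebraMap ℤ R c * z := by
  simp only [algebraMap_int_eq, eq_intCast]
  exact ((Int.cast_commute c z).eq).symm

/-- canonical form of elements of the subring generated by `a, b` with `a² = b² = 0`. -/
noncomputable def rp (a b : R) (T Q Rr S : Polynomial ℤ) : R :=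
  1 + a * b * aeval (a * b) T + aeval (a * b) Q * a + b * aeval (a * b) Rr
    + b * (aeval (a * b) S * a)

section
variable {a b : R}

lemma x_comm_aeval (P : Polynomial ℤ) :
    a * b * aeval (a * b) P = aeval (a * b) P * (a * b) := by
  have h1 : aeval (a*b) (X * P) = aeval (a*b) (P * X) := by rw [mul_comm]
  simpa [map_mul] using h1

lemma a_mul_aeval (haa : a * a = 0) (P : Polynomial ℤ) :
    a * aeval (a * b) P = algebraMap ℤ R (P.coeff 0) * a := by
  induction P using Polynomial.induction_on' with
  | add p q hp hq => simp [map_add, mul_add, add_mul, hp, hq]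
  | monomial n c =>
    cases n with
    | zero =>
      simp [aeval_monomial, (Int.cast_commute c a).eq, Algebra.algebraMap_eq_smul_one]
    | succ m =>
      have h0 : a * (a*b)^(m+1) = 0 := by
        rw [pow_succ', ← mul_assoc, ← mul_assoc, haa, zero_mul, zero_mul]
      rw [aeval_monomial, coeff_monomial, if_neg (Nat.succ_ne_zero m), map_zero, zero_mul,
        ← cast_comm, ← mul_assoc, h0, zero_mul]

lemma aeval_mul_b (hbb : b * b = 0) (P : Polynomial ℤ) :
    aeval (a * b) P * b = algebraMap ℤ R (P.coeff 0) * b := by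
  induction P using Polynomial.induction_on' with
  | add p q hp hq => simp [map_add, mul_add, add_mul, hp, hq]
  | monomial n c =>
    cases n with
    | zero =>
      simp [aeval_monomial]
    | succ m =>
      have h0 : (a*b)^(m+1) * b = 0 := by
        rw [pow_succ, mul_assoc, mul_assoc, hbb, mul_zero, mul_zero]
      rw [aeval_monomial, coeff_monomial, if_neg (Nat.succ_ne_zero m), map_zero, zero_mul,
        mul_assoc, h0, mul_zero]

-- zero lemmas in the exact shapes needed
lemma z_aPa (haa : a * a = 0) (P : Polynomial ℤ) :
    a * (aeval (a * b) P * a) = 0 := by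
  rw [← mul_assoc, a_mul_aeval haa, mul_assoc, haa, mul_zero]

lemma z_bPb (hbb : b * b = 0) (P : Polynomial ℤ) :
    b * (aeval (a * b) P * b) = 0 := by
  rw [aeval_mul_b hbb, ← cast_comm, ← mul_assoc, hbb, zero_mul]

lemma z_xPb (haa : a * a = 0) (hbb : b * b = 0) (P : Polynomial ℤ) :
    a * b * (aeval (a * b) P * b) = 0 := by
  rw [aeval_mul_b hbb, ← cast_comm, mul_assoc a b, ← mul_assoc b b, hbb, zero_mul, mul_zero]

end
end NilpUnitsAux

namespace NilpUnitsAux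
section
variable {R : Type*} [Ring R] {a b : R}

lemma Z1 (haa : a * a = 0) (z : R) : a * (a * z) = 0 := by
  rw [← mul_assoc, haa, zero_mul]

lemma Z2 (hbb : b * b = 0) (z : R) : b * (b * z) = 0 := by
  rw [← mul_assoc, hbb, zero_mul]

lemma Z3 (hbb : b * b = 0) (P : Polynomial ℤ) (z : R) :
    aeval (a*b) P * (b * z) = algebraMap ℤ R (P.coeff 0) * (b * z) := by
  rw [← mul_assoc, aeval_mul_b hbb, mul_assoc]

lemma Z4 (haa : a * a = 0) (P : Polynomial ℤ) (z : R) :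
    a * (aeval (a*b) P * z) = algebraMap ℤ R (P.coeff 0) * (a * z) := by
  rw [← mul_assoc, a_mul_aeval haa, mul_assoc]

lemma Z5 (c : ℤ) (z w : R) :
    z * (algebraMap ℤ R c * w) = algebraMap ℤ R c * (z * w) := by
  rw [← mul_assoc, cast_comm, mul_assoc]

lemma Zx (P : Polynomial ℤ) (z : R) :
    aeval (a*b) P * (a * (b * z)) = a * (b * (aeval (a*b) P * z)) := by
  rw [← mul_assoc, ← mul_assoc, mul_assoc (aeval (a*b) P) a b, ← x_comm_aeval]
  simp only [mul_assoc]

lemma rp_mul (haa : a * a = 0) (hbb : b * b = 0) (T Q Rr S T' Q' R' S' : Polynomial ℤ) :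
    rp a b T Q Rr S * rp a b T' Q' R' S' =
      rp a b (T + T' + X*T*T' + Q*R') (Q + Q' + X*T*Q' + X*Q*S')
             (Rr + R' + X*Rr*T' + X*S*R') (S + S' + Rr*Q' + X*S*S') := by
  simp only [rp, map_add, map_mul, aeval_X, mul_add, add_mul, mul_one, one_mul, mul_assoc,
    Z1 haa, Z2 hbb, Z3 hbb, Z4 haa, Z5, Zx, haa, hbb, mul_zero, zero_mul, add_zero, zero_add]
  abel

end
end NilpUnitsAux

namespace NilpUnitsAux
section
variable {R : Type*} [Ring R] {a b : R}

noncomputable def det4 (T Q Rr S : Polynomial ℤ) : Polynomial ℤ :=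
  (1 + X*T) * (1 + X*S) - X*Q*Rr

lemma det4_mul (T Q Rr S T' Q' R' S' : Polynomial ℤ) :
    det4 (T + T' + X*T*T' + Q*R') (Q + Q' + X*T*Q' + X*Q*S')
         (Rr + R' + X*Rr*T' + X*S*R') (S + S' + Rr*Q' + X*S*S') =
      det4 T Q Rr S * det4 T' Q' R' S' := by
  unfold det4; ring

lemma rp_zero : rp a b 0 0 0 0 = 1 := by simp [rp]

lemma rp_inv (haa : a * a = 0) (hbb : b * b = 0) (g : Rˣ) (T Q Rr S : Polynomial ℤ)
    (hg : (g : R) = rp a b T Q Rr S) (hdet : det4 T Q Rr S = 1) :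
    ((g⁻¹ : Rˣ) : R) = rp a b S (-Q) (-Rr) T := by
  have hX : X * (T + S + X*T*S - Q*Rr) = 0 := by
    have h := hdet; unfold det4 at h; linear_combination h
  have hrel : T + S + X*T*S - Q*Rr = 0 := by
    rcases mul_eq_zero.mp hX with h | h
    · exact absurd h X_ne_zero
    · exact h
  have key : (g : R) * rp a b S (-Q) (-Rr) T = 1 := by
    rw [hg, rp_mul haa hbb]
    have c1 : T + S + X*T*S + Q * -Rr = 0 := by linear_combination hrel
    have c2 : Q + -Q + X*T*(-Q) + X*Q*T = 0 := by ring
    have c3 : Rr + -Rr + X*Rr*S + X*S*(-Rr) = 0 := by ring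
    have c4 : S + T + Rr*(-Q) + X*S*T = 0 := by linear_combination hrel
    rw [c1, c2, c3, c4, rp_zero]
  calc ((g⁻¹ : Rˣ) : R) = ((g⁻¹ : Rˣ) : R) * ((g : R) * rp a b S (-Q) (-Rr) T) := by
        rw [key, mul_one]
    _ = (((g⁻¹ : Rˣ) : R) * (g : R)) * rp a b S (-Q) (-Rr) T := by rw [mul_assoc]
    _ = rp a b S (-Q) (-Rr) T := by rw [Units.inv_mul, one_mul]

lemma rp_alpha : rp a b 0 1 0 0 = 1 + a := by simp [rp]

lemma rp_beta : rp a b 0 0 1 0 = 1 + b := by simp [rp]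

lemma det4_alpha : det4 (0:Polynomial ℤ) 1 0 0 = 1 := by unfold det4; ring

lemma det4_beta : det4 (0:Polynomial ℤ) 0 1 0 = 1 := by unfold det4; ring

end
end NilpUnitsAux

namespace NilpUnitsAux
section
variable {R : Type*} [Ring R] {a b : R}

lemma rp_norm {u : R} {T Q Rr S T' Q' R' S' : Polynomial ℤ} (h : u = rp a b T Q Rr S)
    (hT : T = T') (hQ : Q = Q') (hR : Rr = R') (hS : S = S') :
    u = rp a b T' Q' R' S' := by
  rw [h, hT, hQ, hR, hS]

/-- The inductive invariant for the commutator chain. -/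
def Inv (a b : R) (g : Rˣ) : Prop :=
  ∃ (T Q S : Polynomial ℤ) (ε : ℤ) (n : ℕ), (ε = 1 ∨ ε = -1) ∧
    (g : R) = rp a b T Q (C ε * X^n) S ∧ det4 T Q (C ε * X^n) S = 1

lemma inv_base (haa : a * a = 0) (hbb : b * b = 0) (α β : Rˣ)
    (hα : (α : R) = 1 + a) (hβ : (β : R) = 1 + b) :
    Inv a b ⁅α, β⁆ := by
  have hαr : (α : R) = rp a b 0 1 0 0 := by rw [rp_alpha, hα]
  have hβr : (β : R) = rp a b 0 0 1 0 := by rw [rp_beta, hβ]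
  have hαi : ((α⁻¹ : Rˣ) : R) = rp a b 0 (-1) (-0) 0 :=
    rp_inv haa hbb α 0 1 0 0 hαr det4_alpha
  have hβi : ((β⁻¹ : Rˣ) : R) = rp a b 0 (-0) (-1) 0 :=
    rp_inv haa hbb β 0 0 1 0 hβr det4_beta
  have h1 : ((α * β : Rˣ) : R) = rp a b 1 1 1 0 := by
    rw [Units.val_mul, hαr, hβr, rp_mul haa hbb]
    congr 1 <;> ring
  have h2 : ((α * β * α⁻¹ : Rˣ) : R) = rp a b 1 (-X) 1 (-1) := by
    rw [Units.val_mul, h1, hαi, rp_mul haa hbb]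
    congr 1 <;> ring
  have h3 : ((α * β * α⁻¹ * β⁻¹ : Rˣ) : R) = rp a b (1+X) (-X) (C 1 * X^1) (-1) := by
    rw [Units.val_mul, h2, hβi, rp_mul haa hbb]
    congr 1 <;> (try simp only [Polynomial.C_1]) <;> ring
  refine ⟨1 + X, -X, -1, 1, 1, Or.inl rfl, ?_, ?_⟩
  · rw [commutatorElement_def]; exact h3
  · unfold det4; simp only [map_one]; ring

lemma inv_step (haa : a * a = 0) (hbb : b * b = 0) (α : Rˣ) (hα : (α : R) = 1 + a)
    (g : Rˣ) (hg : Inv a b g) : Inv a b ⁅g, α⁆ := by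
  obtain ⟨T, Q, S, ε, n, hε, hval, hdet⟩ := hg
  set Rr : Polynomial ℤ := C ε * X^n with hRr
  have hC : (C ε : Polynomial ℤ) * C ε = 1 := by
    rcases hε with h | h <;> (subst h; rw [← C_mul]; norm_num)
  have hαr : (α : R) = rp a b 0 1 0 0 := by rw [rp_alpha, hα]
  have hαi : ((α⁻¹ : Rˣ) : R) = rp a b 0 (-1) (-0) 0 :=
    rp_inv haa hbb α 0 1 0 0 hαr det4_alpha
  have hgi : ((g⁻¹ : Rˣ) : R) = rp a b S (-Q) (-Rr) T := rp_inv haa hbb g T Q Rr S hval hdet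
  have h1 : ((g * α : Rˣ) : R) = rp a b T (Q+1+X*T) Rr (S+Rr) := by
    rw [Units.val_mul, hval, hαr, rp_mul haa hbb]
    congr 1 <;> ring
  have h2 : ((g * α * g⁻¹ : Rˣ) : R) =
      rp a b (T + S + X*T*S - (Q+1+X*T)*Rr) ((1+X*T)*(1+X*T)) (-(X*Rr*Rr))
        (S + Rr + T - Rr*Q + X*(S+Rr)*T) := by
    rw [Units.val_mul, h1, hgi, rp_mul haa hbb]
    congr 1 <;> ring
  have h3 : ((g * α * g⁻¹ * α⁻¹ : Rˣ) : R) =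
      rp a b (T + S + X*T*S - (Q+1+X*T)*Rr)
        ((1+X*T)*(1+X*T) - 1 - X*(T + S + X*T*S - (Q+1+X*T)*Rr)) (-(X*Rr*Rr))
        (S + Rr + T - Rr*Q + X*(S+Rr)*T + X*Rr*Rr) := by
    rw [Units.val_mul, h2, hαi, rp_mul haa hbb]
    congr 1 <;> ring
  have hR : -(X*Rr*Rr) = (C (-1 : ℤ)) * X^(2*n+1) := by
    rw [hRr]
    simp only [map_neg, map_one]
    linear_combination (-(X:Polynomial ℤ)^(2*n+1)) * hC
  have hdet3 : det4 (T + S + X*T*S - (Q+1+X*T)*Rr)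
      ((1+X*T)*(1+X*T) - 1 - X*(T + S + X*T*S - (Q+1+X*T)*Rr)) (-(X*Rr*Rr))
      (S + Rr + T - Rr*Q + X*(S+Rr)*T + X*Rr*Rr) = 1 := by
    unfold det4 at hdet ⊢
    linear_combination ((1 + X*T) * (1 + X*S) - X*Q*Rr + 1) * hdet
  refine ⟨T + S + X*T*S - (Q+1+X*T)*Rr,
    (1+X*T)*(1+X*T) - 1 - X*(T + S + X*T*S - (Q+1+X*T)*Rr),
    S + Rr + T - Rr*Q + X*(S+Rr)*T + X*Rr*Rr, -1, 2*n+1, Or.inr rfl, ?_, ?_⟩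
  · rw [commutatorElement_def, h3, hR]
  · rw [← hR]; exact hdet3

end
end NilpUnitsAux

namespace NilpUnitsAux
section
variable {R : Type*} [Ring R] {a b : R}

lemma extract (haa : a * a = 0) (hbb : b * b = 0) (g : Rˣ)
    (hg : Inv a b g) (hcomm : (g : R) * a = a * (g : R)) : IsNilpotent (a * b) := by
  obtain ⟨T, Q, S, ε, n, hε, hval, -⟩ := hg
  have hev : aeval (a*b) (C ε * X^n) = algebraMap ℤ R ε * (a*b)^n := by
    simp [aeval_C]
  have h1 : a * ((g : R) * (a*b)) = algebraMap ℤ R ε * (a*b)^(n+2) := by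
    rw [hval, rp]
    simp only [add_mul, mul_add, one_mul, mul_one, mul_assoc]
    rw [hev]
    simp only [Z1 haa, Z4 haa, Z5, mul_zero, zero_mul, add_zero, zero_add]
    rw [mul_assoc (algebraMap ℤ R ε), Z5, Z5]
    congr 1
    rw [← pow_succ, ← mul_assoc a b, ← pow_succ']
  have h2 : a * ((g : R) * (a*b)) = 0 := by
    calc a * ((g : R) * (a*b)) = a * ((g:R) * a * b) := by rw [mul_assoc (g:R)]
      _ = a * (a * (g:R) * b) := by rw [hcomm]
      _ = a * a * ((g:R) * b) := by noncomm_ring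
      _ = 0 := by rw [haa, zero_mul]
  have h3 : algebraMap ℤ R ε * (a*b)^(n+2) = 0 := by rw [← h1, h2]
  refine ⟨n+2, ?_⟩
  rcases hε with h | h
  · subst h; simpa using h3
  · subst h
    simp only [map_neg, map_one, neg_mul, one_mul, neg_eq_zero] at h3
    exact h3

end
end NilpUnitsAux

namespace NilpUnitsAux
section
variable {R : Type*} [Ring R] {a b : R}

lemma backward (haa : a * a = 0) (hbb : b * b = 0) (α β : Rˣ)
    (hα : (α : R) = 1 + a) (hβ : (β : R) = 1 + b)
    (h : Group.IsNilpotent ↥(Subgroup.closure ({α, β} : Set Rˣ))) :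
    IsNilpotent (a * b) := by
  set G := Subgroup.closure ({α, β} : Set Rˣ) with hG
  have hαG : α ∈ G := Subgroup.subset_closure (by simp)
  have hβG : β ∈ G := Subgroup.subset_closure (by simp)
  set A : G := ⟨α, hαG⟩ with hA
  set B : G := ⟨β, hβG⟩ with hB
  set c : ℕ → G := fun k => Nat.rec ⁅A, B⁆ (fun _ g => ⁅g, A⁆) k with hc
  have hc0 : c 0 = ⁅A, B⁆ := rfl
  have hcs : ∀ k, c (k+1) = ⁅c k, A⁆ := fun k => rfl
  have hcoe : ∀ g h : G, ((⁅g, h⁆ : G) : Rˣ) = ⁅(g : Rˣ), (h : Rˣ)⁆ := fun g h => by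
    simp [commutatorElement_def]
  have hmem : ∀ k, c k ∈ Subgroup.lowerCentralSeries (⊤ : Subgroup G) (k+1) := by
    intro k
    induction k with
    | zero =>
      rw [lowerCentralSeries_succ]
      exact Subgroup.commutator_mem_commutator (Subgroup.mem_top _) (Subgroup.mem_top _)
    | succ m ih =>
      rw [hcs, lowerCentralSeries_succ]
      exact Subgroup.commutator_mem_commutator ih (Subgroup.mem_top _)
  have hval : ∀ k, Inv a b ((c k : G) : Rˣ) := by
    intro k
    induction k with
    | zero => rw [hc0, hcoe]; exact inv_base haa hbb α β hα hβ
    | succ m ih => rw [hcs, hcoe]; exact inv_step haa hbb α hα _ ih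
  obtain ⟨n, hn⟩ := nilpotent_iff_lowerCentralSeries.mp h
  have h1 : c (n+1) = 1 := by
    have := lowerCentralSeries_antitone (⊤ : Subgroup G) (Nat.le_add_right n 2)
    rw [hn] at this
    simpa [Subgroup.mem_bot] using this (hmem (n+1))
  have h2 : (⁅((c n : G) : Rˣ), α⁆ : Rˣ) = 1 := by
    have h5 := congrArg (fun g : G => (g : Rˣ)) h1
    simp only [hcs, hcoe, OneMemClass.coe_one] at h5
    exact h5
  have h3 : ((c n : G) : Rˣ) * α = α * ((c n : G) : Rˣ) :=
    commutatorElement_eq_one_iff_mul_comm.mp h2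
  have h4 : (((c n : G) : Rˣ) : R) * a = a * (((c n : G) : Rˣ) : R) := by
    have := congrArg (Units.val) h3
    rw [Units.val_mul, Units.val_mul, hα, mul_add, add_mul, mul_one, one_mul] at this
    exact add_left_cancel this
  exact extract haa hbb _ (hval n) h4

end
end NilpUnitsAux

namespace NilpUnitsAux
section
variable {R : Type*} [Ring R] {a b : R}

lemma swap_pow (a b : R) : ∀ k, b * (a*b)^k = (b*a)^k * b
  | 0 => by simp
  | (k+1) => by
    rw [pow_succ, ← mul_assoc, swap_pow a b k, pow_succ]
    noncomm_ring

lemma swap_pow' (a b : R) (k : ℕ) : a * (b*a)^k = (a*b)^k * a := swap_pow b a k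

lemma word_classify (haa : a * a = 0) (hbb : b * b = 0) :
    ∀ l : List R, (∀ r ∈ l, r = a ∨ r = b) →
      l.prod = 0 ∨
      (∃ k, l.length = 2*k ∧ (l.prod = (a*b)^k ∨ l.prod = (b*a)^k)) ∨
      (∃ k, l.length = 2*k+1 ∧ (l.prod = (a*b)^k * a ∨ l.prod = (b*a)^k * b)) := by
  have fa : ∀ m : ℕ, a * (a*b)^(m+1) = 0 := fun m => by
    rw [pow_succ', ← mul_assoc, ← mul_assoc, haa, zero_mul, zero_mul]
  have fb : ∀ m : ℕ, b * (b*a)^(m+1) = 0 := fun m => by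
    rw [pow_succ', ← mul_assoc, ← mul_assoc, hbb, zero_mul, zero_mul]
  intro l
  induction l with
  | nil => intro _; exact Or.inr (Or.inl ⟨0, by simp, Or.inl (by simp)⟩)
  | cons r t ih =>
    intro hmem
    have hr : r = a ∨ r = b := hmem r List.mem_cons_self
    have ht : ∀ x ∈ t, x = a ∨ x = b := fun x hx => hmem x (List.mem_cons_of_mem r hx)
    rw [List.prod_cons]
    rcases ih ht with h0 | ⟨k, hlen, hp⟩ | ⟨k, hlen, hp⟩
    · left; rw [h0, mul_zero]
    · -- even case
      rcases hr with hra | hrb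
      · subst hra
        rcases hp with hab | hba
        · cases k with
          | zero =>
            right; right
            exact ⟨0, by simp only [List.length_cons, hlen]; try omega, Or.inl (by simp [hab])⟩
          | succ m =>
            left; rw [hab, fa]
        · right; right
          refine ⟨k, by simp only [List.length_cons, hlen]; try omega, Or.inl ?_⟩
          rw [hba, swap_pow']
      · subst hrb
        rcases hp with hab | hba
        · right; right
          refine ⟨k, by simp only [List.length_cons, hlen]; try omega, Or.inr ?_⟩
          rw [hab, swap_pow]
        · cases k with
          | zero =>
            right; right
            exact ⟨0, by simp only [List.length_cons, hlen]; try omega, Or.inr (by simp [hba])⟩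
          | succ m =>
            left; rw [hba, fb]
    · -- odd case
      rcases hr with hra | hrb
      · subst hra
        rcases hp with hab | hba
        · left
          cases k with
          | zero => rw [hab]; simp [haa]
          | succ m => rw [hab, ← mul_assoc, fa, zero_mul]
        · right; left
          refine ⟨k+1, by simp only [List.length_cons, hlen]; try omega, Or.inl ?_⟩
          rw [hba, ← mul_assoc, swap_pow', mul_assoc, ← pow_succ]
      · subst hrb
        rcases hp with hab | hba
        · right; left
          refine ⟨k+1, by simp only [List.length_cons, hlen]; try omega, Or.inr ?_⟩
          rw [hab, ← mul_assoc, swap_pow, mul_assoc, ← pow_succ]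
        · left
          cases k with
          | zero => rw [hba]; simp [hbb]
          | succ m => rw [hba, ← mul_assoc, fb, zero_mul]

lemma long_word_zero (haa : a * a = 0) (hbb : b * b = 0) {n : ℕ} (hn : (a*b)^n = 0) :
    ∀ l : List R, (∀ r ∈ l, r = a ∨ r = b) → 2*n+2 ≤ l.length → l.prod = 0 := by
  have habk : ∀ k, n ≤ k → (a*b)^k = 0 := fun k hk => by
    rw [← Nat.add_sub_cancel' hk, pow_add, hn, zero_mul]
  have hbak : ∀ k, n+1 ≤ k → (b*a)^k = 0 := fun k hk => by
    have h1 : (b*a)^(n+1) = 0 := by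
      rw [pow_succ, ← mul_assoc, ← swap_pow, hn, mul_zero, zero_mul]
    rw [← Nat.add_sub_cancel' hk, pow_add, h1, zero_mul]
  intro l hl hlen
  rcases word_classify haa hbb l hl with h0 | ⟨k, hk, hp⟩ | ⟨k, hk, hp⟩
  · exact h0
  · rcases hp with h | h
    · rw [h, habk k (by omega)]
    · rw [h, hbak k (by omega)]
  · rcases hp with h | h
    · rw [h, habk k (by omega), zero_mul]
    · rw [h, hbak k (by omega), zero_mul]

end
end NilpUnitsAux

namespace NilpUnitsAux
section
variable {R : Type*} [Ring R] {a b : R}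

/-- span of words in `a, b` of length at least `i`. -/
def M (a b : R) (i : ℕ) : Submodule ℤ R :=
  Submodule.span ℤ {z | ∃ l : List R, i ≤ l.length ∧ (∀ r ∈ l, r = a ∨ r = b) ∧ z = l.prod}

lemma M_mono {i j : ℕ} (h : i ≤ j) : M a b j ≤ M a b i :=
  Submodule.span_mono (fun z ⟨l, hl, hm, hp⟩ => ⟨l, le_trans h hl, hm, hp⟩)

lemma M_mul {i j : ℕ} {z w : R} (hz : z ∈ M a b i) (hw : w ∈ M a b j) :
    z * w ∈ M a b (i + j) := by
  have hle : M a b i * M a b j ≤ M a b (i + j) := by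
    rw [M, M, Submodule.span_mul_span]
    apply Submodule.span_le.mpr
    rintro u ⟨z, ⟨l, hl, hm, rfl⟩, w, ⟨l', hl', hm', rfl⟩, rfl⟩
    apply Submodule.subset_span
    refine ⟨l ++ l', ?_, ?_, ?_⟩
    · rw [List.length_append]; omega
    · intro r hr
      rcases List.mem_append.mp hr with h | h
      · exact hm r h
      · exact hm' r h
    · rw [List.prod_append]
  exact hle (Submodule.mul_mem_mul hz hw)

lemma M_pow {i : ℕ} {z : R} (hz : z ∈ M a b i) : ∀ m : ℕ, z^(m+1) ∈ M a b i := by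
  intro m
  induction m with
  | zero => simpa using hz
  | succ k ih =>
    rw [pow_succ]
    exact M_mono (Nat.le_add_right i i) (M_mul ih hz)

lemma M_a : a ∈ M a b 1 :=
  Submodule.subset_span ⟨[a], by simp, by simp, by simp⟩

lemma M_b : b ∈ M a b 1 :=
  Submodule.subset_span ⟨[b], by simp, by simp, by simp⟩

lemma M_bot (haa : a * a = 0) (hbb : b * b = 0) {n : ℕ} (hn : (a*b)^n = 0) :
    M a b (2*n+2) = ⊥ := by
  rw [eq_bot_iff, M]
  apply Submodule.span_le.mpr
  rintro z ⟨l, hl, hm, rfl⟩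
  simp only [SetLike.mem_coe, Submodule.mem_bot]
  exact long_word_zero haa hbb hn l hm hl

end
end NilpUnitsAux

namespace NilpUnitsAux
section
variable {R : Type*} [Ring R] {a b : R}

lemma M_pow_mul {s : ℕ} {z : R} (hz : z ∈ M a b s) : ∀ m : ℕ, z^(m+1) ∈ M a b ((m+1)*s) := by
  intro m
  induction m with
  | zero => simpa using hz
  | succ k ih =>
    rw [pow_succ]
    have := M_mul ih hz
    have harith : (k+1)*s + s = (k+2)*s := by ring
    rw [harith] at this
    exact this

variable (haa : a * a = 0) (hbb : b * b = 0) {n : ℕ} (hn : (a*b)^n = 0)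

/-- congruence filtration subgroups of `Rˣ`. -/
def Hgrp (a b : R) (n : ℕ) (haa : a * a = 0) (hbb : b * b = 0) (hn : (a*b)^n = 0)
    (i : ℕ) : Subgroup Rˣ where
  carrier := {u : Rˣ | (u : R) - 1 ∈ M a b (i+1)}
  one_mem' := by simp
  mul_mem' := by
    intro u v hu hv
    simp only [Set.mem_setOf_eq, Units.val_mul] at *
    have hid : (u : R) * (v : R) - 1 = ((u:R) - 1) * ((v:R) - 1) + ((u:R) - 1) + ((v:R) - 1) := by
      noncomm_ring
    rw [hid]
    exact add_mem (add_mem (M_mono (Nat.le_add_right _ _) (M_mul hu hv)) hu) hv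
  inv_mem' := by
    intro u hu
    simp only [Set.mem_setOf_eq] at *
    set z : R := (u : R) - 1 with hzdef
    have hzL : z^(2*n+2) = 0 := by
      have h1 : z^(2*n+2) ∈ M a b ((2*n+2)*(i+1)) := by
        have := M_pow_mul hu (2*n+1)
        simpa using this
      have h2 : z^(2*n+2) ∈ M a b (2*n+2) :=
        M_mono (Nat.le_mul_of_pos_right _ (Nat.succ_pos i)) h1
      rw [M_bot haa hbb hn] at h2
      simpa using h2
    have hzeven : (-z)^(2*n+2) = 0 := by
      rw [Even.neg_pow ⟨n+1, by ring⟩, hzL]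
    have hsum : (u : R) * ∑ j ∈ Finset.range (2*n+2), (-z)^j = 1 := by
      have hz1 : (u : R) = 1 + z := by rw [hzdef]; noncomm_ring
      calc (u : R) * ∑ j ∈ Finset.range (2*n+2), (-z)^j
          = ∑ j ∈ Finset.range (2*n+2), ((-z)^j - (-z)^(j+1)) := by
            rw [hz1, Finset.mul_sum]
            refine Finset.sum_congr rfl fun j _ => ?_
            have hc : z * (-z)^j = (-z)^j * z := ((Commute.refl z).neg_right.pow_right j).eq
            rw [pow_succ]
            calc (1+z) * (-z)^j = (-z)^j + z * (-z)^j := by noncomm_ring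
              _ = (-z)^j + (-z)^j * z := by rw [hc]
              _ = (-z)^j - (-z)^j * (-z) := by noncomm_ring
        _ = (-z)^0 - (-z)^(2*n+2) := Finset.sum_range_sub' (fun j => (-z)^j) (2*n+2)
        _ = 1 := by rw [pow_zero, hzeven, sub_zero]
    have hinv : ((u⁻¹ : Rˣ) : R) = ∑ j ∈ Finset.range (2*n+2), (-z)^j := by
      calc ((u⁻¹ : Rˣ) : R) = ((u⁻¹ : Rˣ) : R) * ((u : R) * ∑ j ∈ Finset.range (2*n+2), (-z)^j) := by
            rw [hsum, mul_one]
        _ = (((u⁻¹ : Rˣ) : R) * (u : R)) * ∑ j ∈ Finset.range (2*n+2), (-z)^j := by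
            rw [mul_assoc]
        _ = ∑ j ∈ Finset.range (2*n+2), (-z)^j := by rw [Units.inv_mul, one_mul]
    rw [hinv, Finset.sum_range_succ' (fun j => (-z)^j) (2*n+1)]
    simp only [pow_zero, add_sub_cancel_right]
    apply Submodule.sum_mem
    intro j _
    rcases Nat.even_or_odd (j+1) with he | ho
    · rw [Even.neg_pow he]
      exact M_pow hu j
    · rw [Odd.neg_pow ho]
      exact neg_mem (M_pow hu j)

end
end NilpUnitsAux

namespace NilpUnitsAux
section
variable {R : Type*} [Ring R] {a b : R}

lemma Hgrp_comm {n : ℕ} (haa : a * a = 0) (hbb : b * b = 0) (hn : (a*b)^n = 0)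
    {i j : ℕ} {u v : Rˣ} (hu : u ∈ Hgrp a b n haa hbb hn i) (hv : v ∈ Hgrp a b n haa hbb hn j) :
    ⁅u, v⁆ ∈ Hgrp a b n haa hbb hn (i + j + 1) := by
  have hu' : (u : R) - 1 ∈ M a b (i+1) := hu
  have hv' : (v : R) - 1 ∈ M a b (j+1) := hv
  have hui : ((u⁻¹ : Rˣ) : R) - 1 ∈ M a b (i+1) :=
    (Hgrp a b n haa hbb hn i).inv_mem hu
  have hvi : ((v⁻¹ : Rˣ) : R) - 1 ∈ M a b (j+1) :=
    (Hgrp a b n haa hbb hn j).inv_mem hv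
  show ((⁅u, v⁆ : Rˣ) : R) - 1 ∈ M a b (i + j + 1 + 1)
  set z := (u : R) - 1 with hzd
  set w := (v : R) - 1 with hwd
  set p := ((u⁻¹ : Rˣ) : R) - 1 with hpd
  set q := ((v⁻¹ : Rˣ) : R) - 1 with hqd
  have hone : ((v : R) * (u : R)) * (((u⁻¹ : Rˣ) : R) * ((v⁻¹ : Rˣ) : R)) = 1 := by
    rw [mul_assoc, ← mul_assoc (u : R), Units.mul_inv, one_mul, Units.mul_inv]
  have hid : ((⁅u, v⁆ : Rˣ) : R) - 1 =
      (z*w - w*z) + (z*w - w*z)*p + (z*w - w*z)*q + (z*w - w*z)*(p*q) := by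
    have hval : ((⁅u, v⁆ : Rˣ) : R) =
        (u : R) * (v : R) * ((u⁻¹ : Rˣ) : R) * ((v⁻¹ : Rˣ) : R) := by
      rw [commutatorElement_def]
      simp
    rw [hval]
    have hz : (u : R) = 1 + z := by rw [hzd]; noncomm_ring
    have hw : (v : R) = 1 + w := by rw [hwd]; noncomm_ring
    have hp : ((u⁻¹ : Rˣ) : R) = 1 + p := by rw [hpd]; noncomm_ring
    have hq : ((v⁻¹ : Rˣ) : R) = 1 + q := by rw [hqd]; noncomm_ring
    have hone' : (1+w) * (1+z) * ((1+p) * (1+q)) = 1 := by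
      rw [← hz, ← hw, ← hp, ← hq]; exact hone
    have haux : (u:R) * (v:R) * ((u⁻¹ : Rˣ):R) * ((v⁻¹ : Rˣ):R) =
        (z*w - w*z) + (z*w - w*z)*p + (z*w - w*z)*q + (z*w - w*z)*(p*q) + 1 := by
      calc (u:R) * (v:R) * ((u⁻¹ : Rˣ):R) * ((v⁻¹ : Rˣ):R)
          = (1+z)*(1+w)*((1+p)*(1+q)) := by rw [hz, hw, hp, hq]; noncomm_ring
        _ = (z*w - w*z)*((1+p)*(1+q)) + (1+w)*(1+z)*((1+p)*(1+q)) := by noncomm_ring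
        _ = (z*w - w*z)*((1+p)*(1+q)) + 1 := by rw [hone']
        _ = (z*w - w*z) + (z*w - w*z)*p + (z*w - w*z)*q + (z*w - w*z)*(p*q) + 1 := by
            noncomm_ring
    rw [haux, add_sub_cancel_right]
  rw [hid]
  have hD : z*w - w*z ∈ M a b (i+j+2) := by
    have h1 : z*w ∈ M a b ((i+1)+(j+1)) := M_mul hu' hv'
    have h2 : w*z ∈ M a b ((j+1)+(i+1)) := M_mul hv' hu'
    have e1 : (i+1)+(j+1) = i+j+2 := by omega
    have e2 : (j+1)+(i+1) = i+j+2 := by omega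
    rw [e1] at h1; rw [e2] at h2
    exact sub_mem h1 h2
  have goal_eq : i + j + 1 + 1 = i + j + 2 := by omega
  rw [goal_eq]
  refine add_mem (add_mem (add_mem hD ?_) ?_) ?_
  · exact M_mono (by omega) (M_mul hD hui)
  · exact M_mono (by omega) (M_mul hD hvi)
  · exact M_mono (by omega) (M_mul hD (M_mul hui hvi))

lemma forward (haa : a * a = 0) (hbb : b * b = 0) (α β : Rˣ)
    (hα : (α : R) = 1 + a) (hβ : (β : R) = 1 + b)
    (h : IsNilpotent (a * b)) :
    Group.IsNilpotent ↥(Subgroup.closure ({α, β} : Set Rˣ)) := by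
  obtain ⟨n, hn⟩ := h
  set G := Subgroup.closure ({α, β} : Set Rˣ) with hG
  have hGle : G ≤ Hgrp a b n haa hbb hn 0 := by
    apply (Subgroup.closure_le _).mpr
    rintro u hu
    simp only [Set.mem_insert_iff, Set.mem_singleton_iff] at hu
    rcases hu with h | h
    · show (u : R) - 1 ∈ M a b 1
      rw [h, hα, add_sub_cancel_left]
      exact M_a
    · show (u : R) - 1 ∈ M a b 1
      rw [h, hβ, add_sub_cancel_left]
      exact M_b
  have hlcs : ∀ k, Subgroup.lowerCentralSeries (⊤ : Subgroup G) k ≤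
      Subgroup.comap G.subtype (Hgrp a b n haa hbb hn k) := by
    intro k
    induction k with
    | zero =>
      intro g _
      exact hGle g.2
    | succ m ih =>
      rw [lowerCentralSeries_succ]
      apply Subgroup.commutator_le.mpr
      intro g1 hg1 g2 _
      have h1 : (g1 : Rˣ) ∈ Hgrp a b n haa hbb hn m := ih hg1
      have h2 : (g2 : Rˣ) ∈ Hgrp a b n haa hbb hn 0 := hGle g2.2
      have h3 := Hgrp_comm haa hbb hn h1 h2
      simp only [Subgroup.mem_comap]
      rw [map_commutatorElement]
      simpa using h3
  apply nilpotent_iff_lowerCentralSeries.mpr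
  refine ⟨2*n+1, ?_⟩
  rw [eq_bot_iff]
  intro g hg
  have h1 : ((g : Rˣ) : R) - 1 ∈ M a b (2*n+1+1) := hlcs (2*n+1) hg
  rw [show 2*n+1+1 = 2*n+2 from rfl, M_bot haa hbb hn, Submodule.mem_bot, sub_eq_zero] at h1
  have h2 : (g : Rˣ) = 1 := Units.ext h1
  simpa [Subgroup.mem_bot] using Subtype.ext h2

end
end NilpUnitsAux

/-- **Corollary 3.1(3), first part.** Let `R` be a ring of characteristic `0` and
`a, b ∈ R` with `a² = b² = 0`. Then `ab` is nilpotent if and only if the subgroup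
`⟨1 + a, 1 + b⟩` of the unit group of `R` is nilpotent. -/
theorem nilpotent_mul_iff_nilpotent_group (R : Type*) [Ring R] [CharZero R] (a b : R)
    (ha : a ^ 2 = 0) (hb : b ^ 2 = 0)
    (α β : Rˣ) (hα : (α : R) = 1 + a) (hβ : (β : R) = 1 + b) :
    IsNilpotent (a * b) ↔ Group.IsNilpotent ↥(Subgroup.closure {α, β}) := by
  have haa : a * a = 0 := by rw [← pow_two]; exact ha
  have hbb : b * b = 0 := by rw [← pow_two]; exact hb
  constructor
  · exact NilpUnitsAux.forward haa hbb α β hα hβ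
  · exact NilpUnitsAux.backward haa hbb α β hα hβ
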